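/- Let F = F₁ × ⋯ × F_d with each F_i ⊆ [0,1] closed containing 0 and 1, and let f : F → ℝ be continuous. The multiaffine extension satisfies the explicit formula: for every t ∈ [0,1]^d, P_{F→[0,1]^d}(f)(t) = Σ_{ε₁,…,ε_d ∈ {−,+}} (∏_{j=1}^d ω_{ε_j}(t_j)) · f(t₁^{ε₁},…,t_d^{ε_d}), where for t_j ∈ F_j one sets t_j^− = t_j^+ = t_j and ω_−(t_j) = ω_+(t_j) = 1/2, and for t_j ∉ F_j, t_j^− and t_j^+ are the closest neighbors of t_j in F_j and ω_+(t_j) = (t_j − t_j^−)/(t_j^+ − t_j^−), ω_−(t_j) = 1 − ω_+(t_j). Moreover the 2^d weights ∏_j ω_{ε_j}(t_j) are non-negative and sum to 1. -/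

import Mathlib

open Set
open scoped Classical Topology

/-- Closest left neighbor of `t` in `B`. -/
noncomputable def leftN (B : Set ℝ) (t : ℝ) : ℝ := sSup {u ∈ B | u ≤ t}

/-- Closest right neighbor of `t` in `B`. -/
noncomputable def rightN (B : Set ℝ) (t : ℝ) : ℝ := sInf {u ∈ B | t ≤ u}

/-- The affine extension `L_B g` of a function `g` defined on `B` to `[0,1]`. -/
noncomputable def affExt (B : Set ℝ) (g : ℝ → ℝ) (t : ℝ) : ℝ :=
  if t ∈ B then g t
  else (1 - (t - leftN B t) / (rightN B t - leftN B t)) * g (leftN B t)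
    + (t - leftN B t) / (rightN B t - leftN B t) * g (rightN B t)

/-- Neighbor `t^ε` of `t` in `Fi` (with the convention `t^- = t^+ = t` for `t ∈ Fi`). -/
noncomputable def nbr (Fi : Set ℝ) (t : ℝ) (ε : Bool) : ℝ :=
  if t ∈ Fi then t else if ε then rightN Fi t else leftN Fi t

/-- Weight `ω_ε(t)` (with the convention `ω_-(t) = ω_+(t) = 1/2` for `t ∈ Fi`). -/
noncomputable def wt (Fi : Set ℝ) (t : ℝ) (ε : Bool) : ℝ :=
  if t ∈ Fi then 1/2
  else if ε then (t - leftN Fi t) / (rightN Fi t - leftN Fi t)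
  else 1 - (t - leftN Fi t) / (rightN Fi t - leftN Fi t)

/-- The multiaffine extension `P_{F → [0,1]^d}(f)`, via its explicit formula. -/
noncomputable def multiExt {d : ℕ} (F : Fin d → Set ℝ) (f : (Fin d → ℝ) → ℝ)
    (t : Fin d → ℝ) : ℝ :=
  ∑ ε : Fin d → Bool, (∏ j, wt (F j) (t j) (ε j)) * f (fun j => nbr (F j) (t j) (ε j))

/-- The unit cube `[0,1]^d`. -/
def cube (d : ℕ) : Set (Fin d → ℝ) := Set.pi Set.univ fun _ => Set.Icc (0:ℝ) 1

/-! ### Auxiliary lemmas -/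

lemma leftN_spec {Fi : Set ℝ} {t : ℝ} (hFc : IsClosed Fi) (h0 : (0:ℝ) ∈ Fi)
    (ht0 : 0 ≤ t) :
    leftN Fi t ∈ Fi ∧ leftN Fi t ≤ t ∧ ∀ u ∈ Fi, u ≤ t → u ≤ leftN Fi t := by
  have hbdd : BddAbove {u ∈ Fi | u ≤ t} := ⟨t, fun u hu => hu.2⟩
  have hne : ({u ∈ Fi | u ≤ t} : Set ℝ).Nonempty := ⟨0, h0, ht0⟩
  have hcl : IsClosed {u ∈ Fi | u ≤ t} := hFc.inter isClosed_Iic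
  have hmem := hcl.csSup_mem hne hbdd
  exact ⟨hmem.1, hmem.2, fun u hu hut => le_csSup hbdd ⟨hu, hut⟩⟩

lemma rightN_spec {Fi : Set ℝ} {t : ℝ} (hFc : IsClosed Fi) (h1 : (1:ℝ) ∈ Fi)
    (ht1 : t ≤ 1) :
    rightN Fi t ∈ Fi ∧ t ≤ rightN Fi t ∧ ∀ u ∈ Fi, t ≤ u → rightN Fi t ≤ u := by
  have hbdd : BddBelow {u ∈ Fi | t ≤ u} := ⟨t, fun u hu => hu.2⟩
  have hne : ({u ∈ Fi | t ≤ u} : Set ℝ).Nonempty := ⟨1, h1, ht1⟩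
  have hcl : IsClosed {u ∈ Fi | t ≤ u} := hFc.inter isClosed_Ici
  have hmem := hcl.csInf_mem hne hbdd
  exact ⟨hmem.1, hmem.2, fun u hu hut => csInf_le hbdd ⟨hu, hut⟩⟩

/-- Basic facts about the two neighbors when `t ∉ Fi`. -/
lemma nbr_facts {Fi : Set ℝ} {t : ℝ} (hFc : IsClosed Fi) (h0 : (0:ℝ) ∈ Fi)
    (h1 : (1:ℝ) ∈ Fi) (ht : t ∈ Icc (0:ℝ) 1) (htF : t ∉ Fi) :
    leftN Fi t ∈ Fi ∧ rightN Fi t ∈ Fi ∧ leftN Fi t < t ∧ t < rightN Fi t ∧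
      ∀ u ∈ Ioo (leftN Fi t) (rightN Fi t), u ∉ Fi := by
  obtain ⟨hlm, hlt, hlmax⟩ := leftN_spec hFc h0 ht.1
  obtain ⟨hrm, hrt, hrmin⟩ := rightN_spec hFc h1 ht.2
  have hl : leftN Fi t < t := lt_of_le_of_ne hlt (fun h => htF (h ▸ hlm))
  have hr : t < rightN Fi t := lt_of_le_of_ne hrt (fun h => htF (h ▸ hrm))
  refine ⟨hlm, hrm, hl, hr, fun u hu huF => ?_⟩
  rcases le_total u t with h | h
  · exact absurd (hlmax u huF h) (not_le.mpr hu.1)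
  · exact absurd (hrmin u huF h) (not_le.mpr hu.2)

lemma wt_sum (Fi : Set ℝ) (t : ℝ) : wt Fi t false + wt Fi t true = 1 := by
  by_cases h : t ∈ Fi <;> simp [wt, h] <;> ring

lemma wt_nonneg {Fi : Set ℝ} {t : ℝ} (hFc : IsClosed Fi) (h0 : (0:ℝ) ∈ Fi)
    (h1 : (1:ℝ) ∈ Fi) (ht : t ∈ Icc (0:ℝ) 1) (b : Bool) : 0 ≤ wt Fi t b := by
  by_cases h : t ∈ Fi
  · simp [wt, h]
  · obtain ⟨_, _, hl, hr, _⟩ := nbr_facts hFc h0 h1 ht h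
    have hba : (0:ℝ) < rightN Fi t - leftN Fi t := by linarith
    have hla : (0:ℝ) ≤ t - leftN Fi t := by linarith
    have hle : (t - leftN Fi t) / (rightN Fi t - leftN Fi t) ≤ 1 := by
      rw [div_le_one hba]; linarith
    cases b <;> simp [wt, h]
    · linarith
    · positivity

/-- Abstract reindexing step: summing out one Boolean coordinate. -/
lemma sum_split {d : ℕ} (i : Fin d) (c : (Fin d → Bool) → Bool → ℝ)
    (hc : ∀ ε b b', c (Function.update ε i b') b = c ε b) :
    ∑ ε : Fin d → Bool, ∑ b : Bool, c ε b = ∑ ε : Fin d → Bool, 2 * c ε (ε i) := by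
  have hσ : Function.Involutive
      (fun p : (Fin d → Bool) × Bool => (Function.update p.1 i p.2, p.1 i)) := by
    intro p; simp [Function.update_idem, Function.update_eq_self]
  have key := Fintype.sum_bijective _ hσ.bijective
    (fun p : (Fin d → Bool) × Bool => c p.1 p.2)
    (fun p : (Fin d → Bool) × Bool => c p.1 (p.1 i))
    (fun p => by simp [hc])
  rw [Fintype.sum_prod_type, Fintype.sum_prod_type] at key
  rw [key]
  refine Finset.sum_congr rfl fun ε _ => ?_
  simp [Fintype.sum_bool]

/-- The key one-dimensional step: the value of `g` at a point of the cube is the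
weighted average of its values at the two points where coordinate `i` is replaced
by the neighbors in `F i`. -/
lemma key_step (d : ℕ) (F : Fin d → Set ℝ)
    (hFsub : ∀ i, F i ⊆ Set.Icc (0:ℝ) 1) (hFc : ∀ i, IsClosed (F i))
    (h0 : ∀ i, (0:ℝ) ∈ F i) (h1 : ∀ i, (1:ℝ) ∈ F i)
    (g : (Fin d → ℝ) → ℝ) (hgcont : ContinuousOn g (cube d))
    (hcut : ∀ i : Fin d, ∀ t ∈ cube d, ∀ a b : ℝ,
      Set.Ioo a b ⊆ Set.Icc (0:ℝ) 1 \ F i →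
      ∃ c e : ℝ, ∀ u ∈ Set.Ioo a b, g (Function.update t i u) = c * u + e)
    (i : Fin d) (p : Fin d → ℝ) (hp : p ∈ cube d) :
    g p = ∑ b : Bool, wt (F i) (p i) b * g (Function.update p i (nbr (F i) (p i) b)) := by
  have hpi : p i ∈ Icc (0:ℝ) 1 := hp i (mem_univ i)
  by_cases h : p i ∈ F i
  · simp only [wt, nbr, if_pos h, Function.update_eq_self, Fintype.sum_bool]
    ring
  · obtain ⟨hlm, hrm, hl, hr, hgap⟩ := nbr_facts (hFc i) (h0 i) (h1 i) hpi h
    set a := leftN (F i) (p i) with ha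
    set b := rightN (F i) (p i) with hb
    have hab : a < b := lt_trans hl hr
    have haI : a ∈ Icc (0:ℝ) 1 := hFsub i hlm
    have hbI : b ∈ Icc (0:ℝ) 1 := hFsub i hrm
    have hsub : Ioo a b ⊆ Icc (0:ℝ) 1 \ F i := fun u hu =>
      ⟨⟨le_trans haI.1 (le_of_lt hu.1), le_trans (le_of_lt hu.2) hbI.2⟩, hgap u hu⟩
    obtain ⟨c, e, hce⟩ := hcut i p hp a b hsub
    -- the cut function
    set φ : ℝ → ℝ := fun u => g (Function.update p i u) with hφ
    have hmaps : ∀ u ∈ Icc a b, Function.update p i u ∈ cube d := by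
      intro u hu j _
      rcases eq_or_ne j i with rfl | hj
      · simp only [Function.update_self]
        exact ⟨le_trans haI.1 hu.1, le_trans hu.2 hbI.2⟩
      · simp only [Function.update_of_ne hj]
        exact hp j (mem_univ j)
    have hupd : Continuous (fun u : ℝ => Function.update p i u) := by
      apply continuous_pi
      intro j
      rcases eq_or_ne j i with rfl | hj
      · simpa only [Function.update_self] using continuous_id'
      · simpa only [Function.update_of_ne hj] using continuous_const
    have hφcont : ContinuousOn φ (Icc a b) :=
      hgcont.comp hupd.continuousOn (fun u hu => hmaps u hu)
    have hval : ∀ v ∈ Icc a b, (𝓝[Ioo a b] v).NeBot → φ v = c * v + e := by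
      intro v hv hne
      have h1' : Filter.Tendsto φ (𝓝[Ioo a b] v) (𝓝 (φ v)) :=
        ((hφcont v hv).mono Ioo_subset_Icc_self).tendsto
      have h2' : Filter.Tendsto φ (𝓝[Ioo a b] v) (𝓝 (c * v + e)) := by
        have : Filter.Tendsto (fun u => c * u + e) (𝓝[Ioo a b] v) (𝓝 (c * v + e)) :=
          ((continuous_const.mul continuous_id).add continuous_const).continuousWithinAt
        exact this.congr' (by
          filter_upwards [self_mem_nhdsWithin] with u hu using (hce u hu).symm)
      exact tendsto_nhds_unique h1' h2'
    have hφa : φ a = c * a + e :=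
      hval a ⟨le_refl a, le_of_lt hab⟩ (left_nhdsWithin_Ioo_neBot hab)
    have hφb : φ b = c * b + e :=
      hval b ⟨le_of_lt hab, le_refl b⟩ (right_nhdsWithin_Ioo_neBot hab)
    have hφt : g p = c * p i + e := by
      have := hce (p i) ⟨hl, hr⟩
      rwa [Function.update_eq_self] at this
    have hba : b - a ≠ 0 := by linarith
    simp only [wt, nbr, if_neg h, Fintype.sum_bool, if_pos, if_neg Bool.false_ne_true]
    rw [show Function.update p i (rightN (F i) (p i)) = Function.update p i b from rfl,
      show Function.update p i (leftN (F i) (p i)) = Function.update p i a from rfl]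
    have : g (Function.update p i b) = c * b + e := hφb
    have h2 : g (Function.update p i a) = c * a + e := hφa
    rw [hφt, this, h2, ← ha, ← hb]
    field_simp
    ring

theorem stmt10 (d : ℕ) (hd : 1 ≤ d) (F : Fin d → Set ℝ)
    (hFsub : ∀ i, F i ⊆ Set.Icc (0:ℝ) 1) (hFc : ∀ i, IsClosed (F i))
    (h0 : ∀ i, (0:ℝ) ∈ F i) (h1 : ∀ i, (1:ℝ) ∈ F i)
    (f : (Fin d → ℝ) → ℝ) (hf : ContinuousOn f (Set.pi Set.univ F))
    (g : (Fin d → ℝ) → ℝ)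
    (hgcont : ContinuousOn g (cube d))
    (hgf : ∀ t ∈ Set.pi Set.univ F, g t = f t)
    (hcut : ∀ i : Fin d, ∀ t ∈ cube d, ∀ a b : ℝ,
      Set.Ioo a b ⊆ Set.Icc (0:ℝ) 1 \ F i →
      ∃ c e : ℝ, ∀ u ∈ Set.Ioo a b, g (Function.update t i u) = c * u + e) :
    ∀ t ∈ cube d,
      g t = multiExt F f t ∧
      (∀ ε : Fin d → Bool, 0 ≤ ∏ j, wt (F j) (t j) (ε j)) ∧
      (∑ ε : Fin d → Bool, ∏ j, wt (F j) (t j) (ε j)) = 1 := by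
  intro t ht
  -- weight nonnegativity
  have hwnn : ∀ ε : Fin d → Bool, 0 ≤ ∏ j, wt (F j) (t j) (ε j) := by
    intro ε
    exact Finset.prod_nonneg fun j _ =>
      wt_nonneg (hFc j) (h0 j) (h1 j) (ht j (mem_univ j)) (ε j)
  -- weights sum to one
  have hwsum : (∑ ε : Fin d → Bool, ∏ j, wt (F j) (t j) (ε j)) = 1 := by
    rw [← Fintype.prod_sum (fun j (b : Bool) => wt (F j) (t j) b)]
    rw [Finset.prod_eq_one]
    intro j _
    rw [Fintype.sum_bool, add_comm]
    exact wt_sum (F j) (t j)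
  refine ⟨?_, hwnn, hwsum⟩
  -- auxiliary notation
  set w : Finset (Fin d) → Fin d → Bool → ℝ :=
    fun s j b => if j ∈ s then wt (F j) (t j) b else 1/2 with hw
  set P : Finset (Fin d) → (Fin d → Bool) → (Fin d → ℝ) :=
    fun s ε j => if j ∈ s then nbr (F j) (t j) (ε j) else t j with hP
  have hPcube : ∀ s ε, P s ε ∈ cube d := by
    intro s ε j _
    simp only [hP]
    by_cases hj : j ∈ s
    · rw [if_pos hj]
      by_cases hF : t j ∈ F j
      · rw [nbr, if_pos hF]; exact ht j (mem_univ j)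
      · obtain ⟨hlm, hrm, _, _, _⟩ :=
          nbr_facts (hFc j) (h0 j) (h1 j) (ht j (mem_univ j)) hF
        rw [nbr, if_neg hF]
        cases ε j
        · simpa using hFsub j hlm
        · simpa using hFsub j hrm
    · rw [if_neg hj]; exact ht j (mem_univ j)
  have main : ∀ s : Finset (Fin d),
      g t = ∑ ε : Fin d → Bool, (∏ j, w s j (ε j)) * g (P s ε) := by
    intro s
    induction s using Finset.induction_on with
    | empty =>
        have hPe : ∀ ε : Fin d → Bool, P ∅ ε = t := by
          intro ε; funext j; simp [hP]
        have hwe : ∀ ε : Fin d → Bool, (∏ j, w ∅ j (ε j)) = (1/2 : ℝ)^d := by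
          intro ε; simp [hw]
        simp only [hPe, hwe]
        rw [Finset.sum_const, Finset.card_univ]
        have hcard : Fintype.card (Fin d → Bool) = 2^d := by
          simp [Fintype.card_fun]
        rw [hcard, nsmul_eq_mul]
        push_cast
        rw [← mul_assoc, ← mul_pow]
        norm_num
    | insert i s hi ih =>
        -- apply the key step at each point `P s ε`
        have step : ∀ ε : Fin d → Bool,
            g (P s ε) = ∑ b : Bool,
              wt (F i) (t i) b * g (P (insert i s) (Function.update ε i b)) := by
          intro ε
          have h1' := key_step d F hFsub hFc h0 h1 g hgcont hcut i (P s ε) (hPcube s ε)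
          have hPi : (P s ε) i = t i := by simp [hP, hi]
          rw [hPi] at h1'
          rw [h1']
          refine Finset.sum_congr rfl fun b _ => ?_
          congr 1
          congr 1
          funext j
          rcases eq_or_ne j i with rfl | hj
          · simp [hP, Function.update_self]
          · simp [hP, Function.update_of_ne hj, Finset.mem_insert, hj]
        rw [ih]
        simp only [step, Finset.mul_sum]
        rw [sum_split i (fun ε b => (∏ j, w s j (ε j)) *
              (wt (F i) (t i) b * g (P (insert i s) (Function.update ε i b))))
            (by
              intro ε b b'
              have hprod : (∏ j, w s j (Function.update ε i b' j)) = ∏ j, w s j (ε j) := by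
                refine Finset.prod_congr rfl fun j _ => ?_
                rcases eq_or_ne j i with rfl | hj
                · simp [hw, hi]
                · rw [Function.update_of_ne hj]
              simp only [Function.update_idem, hprod])]
        refine Finset.sum_congr rfl fun ε _ => ?_
        rw [Function.update_eq_self]
        have hrest : (∏ j ∈ Finset.univ \ {i}, w (insert i s) j (ε j)) =
            ∏ j ∈ Finset.univ \ {i}, w s j (ε j) := by
          refine Finset.prod_congr rfl fun j hj => ?_
          have hj' : j ≠ i := by
            simpa using (Finset.mem_sdiff.mp hj).2
          simp [hw, Finset.mem_insert, hj']
        rw [Finset.prod_eq_mul_prod_sdiff_singleton_of_mem (Finset.mem_univ i) (fun j => w (insert i s) j (ε j)),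
          Finset.prod_eq_mul_prod_sdiff_singleton_of_mem (Finset.mem_univ i) (fun j => w s j (ε j)),
          hrest]
        have hwi : w (insert i s) i (ε i) = wt (F i) (t i) (ε i) := by
          simp [hw]
        have hwi' : w s i (ε i) = 1/2 := by simp [hw, hi]
        rw [hwi, hwi']
        ring
  -- conclude from `main univ`
  have hfin := main Finset.univ
  have hPF : ∀ ε : Fin d → Bool, P Finset.univ ε ∈ Set.pi Set.univ F := by
    intro ε j _
    simp only [hP, Finset.mem_univ, if_pos]
    by_cases hF : t j ∈ F j
    · rw [nbr, if_pos hF]; exact hF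
    · obtain ⟨hlm, hrm, _, _, _⟩ :=
        nbr_facts (hFc j) (h0 j) (h1 j) (ht j (mem_univ j)) hF
      rw [nbr, if_neg hF]
      cases ε j
      · simpa using hlm
      · simpa using hrm
  rw [hfin, multiExt]
  refine Finset.sum_congr rfl fun ε _ => ?_
  have h1' : (∏ j, w Finset.univ j (ε j)) = ∏ j, wt (F j) (t j) (ε j) := by
    refine Finset.prod_congr rfl fun j _ => ?_
    simp [hw]
  have h2' : g (P Finset.univ ε) = f (fun j => nbr (F j) (t j) (ε j)) := by
    rw [hgf _ (hPF ε)]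
    congr 1
    funext j
    simp [hP]
  rw [h1', h2']
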